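/- Let R be a ring and S a subset of R satisfying: (i) if ab ∈ S then a ∈ S; (ii) S is a right Ore set; (iii) every element of S is regular; (iv) Q := R[S⁻¹] is directly finite. Then every divisible torsion-free right R-module M admits a (necessarily unique) right Q-module structure extending its right R-module structure. In particular, for any torsion-free right R-module M, the largest h-divisible submodule h(M) equals the largest divisible submodule d(M). -/

import Mathlib

/-!
STATEMENT 1: Let R be a ring and S a subset of R satisfying: (i) if ab ∈ S then a ∈ S;
(ii) S is a right Ore set; (iii) every element of S is regular; (iv) Q := R[S⁻¹] is
directly finite. Then every divisible torsion-free right R-module M admits a (necessarily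
unique) right Q-module structure extending its right R-module structure. In particular,
for any torsion-free right R-module M, the largest h-divisible submodule h(M) equals the
largest divisible submodule d(M).

Right `R`-modules are left `Rᵐᵒᵖ`-modules.  The localization is a ring `Q` with an
injective ring homomorphism `φ : R →+* Q` such that `φ s` is invertible for `s ∈ S` and
every element of `Q` is a right fraction `φ r * (φ s)⁻¹`; it is a right `R`-module via
`op r • q = q * φ r`.  `M` is torsion-free when right multiplication by each `s ∈ S` is
injective and divisible when `Ms = M` for all `s ∈ S`; `d(M)` is the largest divisible
submodule (the supremum of all divisible submodules) and `h(M)` is the largest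
h-divisible submodule (the supremum of all submodules `N` such that every element of `N`
is the value at `1` of a homomorphism `Q → M` of right `R`-modules with range inside `N`).
-/

universe u
open MulOpposite

section Defs

variable (R : Type u) [Ring R] (S : Submonoid R)
variable (M : Type u) [AddCommGroup M] [Module Rᵐᵒᵖ M]

/-- `d(M)`: the largest divisible submodule of the right `R`-module `M`, i.e. the
supremum of all submodules `N` with `Ns = N` for every `s ∈ S`. -/
def divSub : Submodule Rᵐᵒᵖ M :=
  sSup {N : Submodule Rᵐᵒᵖ M | ∀ s ∈ S, ∀ y ∈ N, ∃ z ∈ N, y = op s • z}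

variable (Q : Type u) [Ring Q] [Module Rᵐᵒᵖ Q]

/-- `h(M)`: the largest h-divisible submodule of the right `R`-module `M`, i.e. the
supremum of all submodules every element of which is the image of `1 ∈ Q` under a
homomorphism of right `R`-modules `Q → M` with range contained in the submodule.
(A homomorphism `R → M` extends to `Q → M` precisely when its value at `1` is such.) -/
def hdivSub : Submodule Rᵐᵒᵖ M :=
  sSup {N : Submodule Rᵐᵒᵖ M |
    ∀ y ∈ N, ∃ g : Q →ₗ[Rᵐᵒᵖ] M, LinearMap.range g ≤ N ∧ g 1 = y}

end Defs

section Aux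

variable {R Q : Type u} [Ring R] [Ring Q] {S : Submonoid R} {φ : R →+* Q}
variable {M : Type u} [AddCommGroup M] [Module Rᵐᵒᵖ M]

theorem op_mul_smul' (a b : R) (x : M) : op (a * b) • x = op b • (op a • x) := by
  rw [op_mul, mul_smul]

theorem tf_cancel (tf : ∀ s ∈ S, ∀ x : M, op s • x = 0 → x = 0)
    {s : R} (hs : s ∈ S) {x y : M} (h : op s • x = op s • y) : x = y := by
  have := tf s hs (x - y) (by rw [smul_sub, h, sub_self])
  exact sub_eq_zero.mp this

variable (φ) in
/-- The `Q`-scalar multiplication on a divisible torsion-free module. -/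
noncomputable def qsmul (dv : ∀ s ∈ S, ∀ y : M, ∃ x : M, y = op s • x)
    (hfrac : ∀ q : Q, ∃ (r : R) (s : R), s ∈ S ∧ q * φ s = φ r) (q : Q) (x : M) : M :=
  (dv (hfrac q).choose_spec.choose (hfrac q).choose_spec.choose_spec.1
    (op (hfrac q).choose • x)).choose

theorem qsmul_spec (tf : ∀ s ∈ S, ∀ x : M, op s • x = 0 → x = 0)
    (dv : ∀ s ∈ S, ∀ y : M, ∃ x : M, y = op s • x)
    (hfrac : ∀ q : Q, ∃ (r : R) (s : R), s ∈ S ∧ q * φ s = φ r)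
    (hOre : ∀ (r : R), ∀ s ∈ S, ∃ (r' s' : R), s' ∈ S ∧ r * s' = s * r')
    (hinj : Function.Injective φ)
    (q : Q) (x : M) {s r : R} (hs : s ∈ S) (h : q * φ s = φ r) :
    op s • qsmul φ dv hfrac q x = op r • x := by
  set r₀ := (hfrac q).choose with hr₀
  set s₀ := (hfrac q).choose_spec.choose with hs₀
  have hs₀S : s₀ ∈ S := (hfrac q).choose_spec.choose_spec.1
  have h₀ : q * φ s₀ = φ r₀ := (hfrac q).choose_spec.choose_spec.2
  have hy : op s₀ • qsmul φ dv hfrac q x = op r₀ • x :=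
    (dv s₀ hs₀S (op r₀ • x)).choose_spec.symm
  obtain ⟨a, b, hb, hab⟩ := hOre s s₀ hs₀S
  -- hab : s * b = s₀ * a
  have hrb : r * b = r₀ * a := by
    apply hinj
    have : q * φ (s * b) = q * φ (s₀ * a) := by rw [hab]
    rw [map_mul, map_mul, ← mul_assoc, ← mul_assoc, h, h₀] at this
    rwa [map_mul, map_mul]
  set y := qsmul φ dv hfrac q x
  have key : op b • (op s • y) = op b • (op r • x) := by
    calc op b • (op s • y) = op (s * b) • y := (op_mul_smul' s b y).symm
      _ = op (s₀ * a) • y := by rw [hab]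
      _ = op a • (op s₀ • y) := op_mul_smul' s₀ a y
      _ = op a • (op r₀ • x) := by rw [hy]
      _ = op (r₀ * a) • x := (op_mul_smul' r₀ a x).symm
      _ = op (r * b) • x := by rw [hrb]
      _ = op b • (op r • x) := op_mul_smul' r b x
  exact tf_cancel tf hb key

variable (tf : ∀ s ∈ S, ∀ x : M, op s • x = 0 → x = 0)
    (dv : ∀ s ∈ S, ∀ y : M, ∃ x : M, y = op s • x)
    (hfrac : ∀ q : Q, ∃ (r : R) (s : R), s ∈ S ∧ q * φ s = φ r)
    (hOre : ∀ (r : R), ∀ s ∈ S, ∃ (r' s' : R), s' ∈ S ∧ r * s' = s * r')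
    (hinj : Function.Injective φ)

include tf hOre hinj

theorem qsmul_phi (r : R) (x : M) : qsmul φ dv hfrac (φ r) x = op r • x := by
  have := qsmul_spec tf dv hfrac hOre hinj (φ r) x S.one_mem
    (by rw [map_one, mul_one] : φ r * φ 1 = φ r)
  rwa [op_one, one_smul] at this

theorem qsmul_one (x : M) : qsmul φ dv hfrac (1 : Q) x = x := by
  have := qsmul_phi tf dv hfrac hOre hinj 1 x
  rwa [map_one, op_one, one_smul] at this

theorem qsmul_add_left (q₁ q₂ : Q) (x : M) :
    qsmul φ dv hfrac (q₁ + q₂) x = qsmul φ dv hfrac q₁ x + qsmul φ dv hfrac q₂ x := by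
  obtain ⟨r₁, s₁, hs₁, h₁⟩ := hfrac q₁
  obtain ⟨r₂, s₂, hs₂, h₂⟩ := hfrac q₂
  obtain ⟨a, b, hb, hab⟩ := hOre s₂ s₁ hs₁
  -- hab : s₂ * b = s₁ * a
  have hsS : s₂ * b ∈ S := S.mul_mem hs₂ hb
  have e₁ : q₁ * φ (s₂ * b) = φ (r₁ * a) := by
    rw [hab, map_mul, map_mul, ← mul_assoc, h₁]
  have e₂ : q₂ * φ (s₂ * b) = φ (r₂ * b) := by
    rw [map_mul, map_mul, ← mul_assoc, h₂]
  have e : (q₁ + q₂) * φ (s₂ * b) = φ (r₁ * a + r₂ * b) := by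
    rw [add_mul, map_add]
    rw [map_mul] at e₁ e₂ ⊢
    rw [e₁, e₂, map_mul, map_mul]
  apply tf_cancel tf hsS
  rw [qsmul_spec tf dv hfrac hOre hinj _ x hsS e, smul_add,
    qsmul_spec tf dv hfrac hOre hinj _ x hsS e₁,
    qsmul_spec tf dv hfrac hOre hinj _ x hsS e₂, op_add, add_smul]

theorem qsmul_add_right (q : Q) (x y : M) :
    qsmul φ dv hfrac q (x + y) = qsmul φ dv hfrac q x + qsmul φ dv hfrac q y := by
  obtain ⟨r, s, hs, h⟩ := hfrac q
  apply tf_cancel tf hs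
  rw [qsmul_spec tf dv hfrac hOre hinj _ _ hs h, smul_add, smul_add,
    qsmul_spec tf dv hfrac hOre hinj _ _ hs h,
    qsmul_spec tf dv hfrac hOre hinj _ _ hs h]

theorem qsmul_mul (q₁ q₂ : Q) (x : M) :
    qsmul φ dv hfrac (q₁ * q₂) x = qsmul φ dv hfrac q₂ (qsmul φ dv hfrac q₁ x) := by
  obtain ⟨r₁, s₁, hs₁, h₁⟩ := hfrac q₁
  obtain ⟨r₂, s₂, hs₂, h₂⟩ := hfrac q₂
  obtain ⟨a, b, hb, hab⟩ := hOre r₂ s₁ hs₁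
  -- hab : r₂ * b = s₁ * a
  have hsS : s₂ * b ∈ S := S.mul_mem hs₂ hb
  have e : (q₁ * q₂) * φ (s₂ * b) = φ (r₁ * a) := by
    rw [map_mul, show q₁ * q₂ * (φ s₂ * φ b) = q₁ * (q₂ * φ s₂ * φ b) by
      rw [mul_assoc, mul_assoc], h₂, ← map_mul, hab, map_mul, ← mul_assoc, h₁, ← map_mul]
  apply tf_cancel tf hsS
  rw [qsmul_spec tf dv hfrac hOre hinj _ x hsS e]
  set z := qsmul φ dv hfrac q₁ x with hz
  have hz₁ : op s₁ • z = op r₁ • x := qsmul_spec tf dv hfrac hOre hinj q₁ x hs₁ h₁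
  have hz₂ : op s₂ • qsmul φ dv hfrac q₂ z = op r₂ • z :=
    qsmul_spec tf dv hfrac hOre hinj q₂ z hs₂ h₂
  calc op (r₁ * a) • x = op a • (op r₁ • x) := op_mul_smul' r₁ a x
    _ = op a • (op s₁ • z) := by rw [hz₁]
    _ = op (s₁ * a) • z := (op_mul_smul' s₁ a z).symm
    _ = op (r₂ * b) • z := by rw [hab]
    _ = op b • (op r₂ • z) := op_mul_smul' r₂ b z
    _ = op b • (op s₂ • qsmul φ dv hfrac q₂ z) := by rw [hz₂]
    _ = op (s₂ * b) • qsmul φ dv hfrac q₂ z := (op_mul_smul' s₂ b _).symm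

/-- The `Qᵐᵒᵖ`-module structure on a divisible torsion-free module. -/
noncomputable def qmodule : Module Qᵐᵒᵖ M :=
  letI : SMul Qᵐᵒᵖ M := ⟨fun a x => qsmul φ dv hfrac a.unop x⟩
  Module.ofMinimalAxioms
    (fun a x y => qsmul_add_right tf dv hfrac hOre hinj a.unop x y)
    (fun a b x => by
      show qsmul φ dv hfrac (a.unop + b.unop) x = _
      exact qsmul_add_left tf dv hfrac hOre hinj a.unop b.unop x)
    (fun a b x => by
      show qsmul φ dv hfrac (b.unop * a.unop) x = _
      exact qsmul_mul tf dv hfrac hOre hinj b.unop a.unop x)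
    (fun x => qsmul_one tf dv hfrac hOre hinj x)

theorem qmodule_smul (a : Qᵐᵒᵖ) (x : M) :
    @SMul.smul Qᵐᵒᵖ M ((qmodule tf dv hfrac hOre hinj
      ).toDistribMulAction.toMulAction.toSMul) a x = qsmul φ dv hfrac a.unop x := rfl

end Aux


theorem stmt1 (R Q : Type u) [Ring R] [Ring Q] (S : Submonoid R) (φ : R →+* Q)
    [Module Rᵐᵒᵖ Q] (hsmul : ∀ (q : Q) (r : R), op r • q = q * φ r)
    -- (i) `ab ∈ S` implies `a ∈ S`
    (hsat : ∀ a b : R, a * b ∈ S → a ∈ S)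
    -- (ii) `S` is a right Ore set
    (hOre : ∀ (r : R), ∀ s ∈ S, ∃ (r' s' : R), s' ∈ S ∧ r * s' = s * r')
    -- (iii) the elements of `S` are regular
    (hreg : ∀ s ∈ S, IsRegular s)
    -- (iv) `Q` is directly finite
    (hdf : ∀ a b : Q, a * b = 1 → b * a = 1)
    -- `Q` is the right Ore localization `R[S⁻¹]`
    (hinj : Function.Injective φ)
    (hunit : ∀ s ∈ S, IsUnit (φ s))
    (hfrac : ∀ q : Q, ∃ (r : R) (s : R), s ∈ S ∧ q * φ s = φ r) :
    -- every divisible torsion-free right `R`-module has a unique right `Q`-module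
    -- structure extending its right `R`-module structure
    (∀ (M : Type u) [AddCommGroup M] [Module Rᵐᵒᵖ M],
      (∀ s ∈ S, ∀ x : M, op s • x = 0 → x = 0) →
      (∀ s ∈ S, ∀ y : M, ∃ x : M, y = op s • x) →
      ∃! mQ : Module Qᵐᵒᵖ M, ∀ (r : R) (x : M),
        @SMul.smul Qᵐᵒᵖ M (mQ.toDistribMulAction.toMulAction.toSMul) (op (φ r)) x
          = op r • x) ∧
    -- for every torsion-free right `R`-module, `h(M) = d(M)`
    (∀ (M : Type u) [AddCommGroup M] [Module Rᵐᵒᵖ M],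
      (∀ s ∈ S, ∀ x : M, op s • x = 0 → x = 0) →
      hdivSub R M Q = divSub R S M) := by
  constructor
  · -- Part 1: unique Q-module structure
    intro M _ _ tf dv
    refine ⟨qmodule tf dv hfrac hOre hinj, fun r x => ?_, fun mQ hmQ => ?_⟩
    · rw [qmodule_smul]
      exact qsmul_phi tf dv hfrac hOre hinj r x
    · letI := mQ
      refine Module.ext' mQ _ fun a x => ?_
      show a • x = qsmul φ dv hfrac a.unop x
      obtain ⟨r, s, hs, h⟩ := hfrac a.unop
      apply tf_cancel tf hs
      rw [qsmul_spec tf dv hfrac hOre hinj _ _ hs h]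
      have hc : ∀ (r : R) (x : M), (op (φ r) : Qᵐᵒᵖ) • x = op r • x := hmQ
      have h2 : (op (φ s) : Qᵐᵒᵖ) * op (unop a) = op (φ r) := by
        rw [← op_mul, h]
      rw [← hc s (a • x), ← mul_smul, ← op_unop a, h2, hc r x]
  · -- Part 2: h(M) = d(M)
    intro M _ _ tf
    apply le_antisymm
    · -- h(M) ≤ d(M)
      apply sSup_le
      intro N hN
      apply le_sSup
      intro s hs y hy
      obtain ⟨g, hrange, hg1⟩ := hN y hy
      set u := (hunit s hs).unit with hu
      refine ⟨g ((u⁻¹ : Qˣ) : Q), hrange ⟨_, rfl⟩, ?_⟩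
      have hinv : op s • ((u⁻¹ : Qˣ) : Q) = 1 := by
        rw [hsmul, ← (hunit s hs).unit_spec, ← hu, Units.inv_mul]
      rw [← g.map_smul, hinv, hg1]
    · -- d(M) ≤ h(M)
      apply le_sSup
      intro y hy
      have dvD : ∀ s ∈ S, ∀ z ∈ divSub R S M, ∃ w ∈ divSub R S M, z = op s • w := by
        intro s hs z hz
        have hz' : z ∈ ⨆ N : {N : Submodule Rᵐᵒᵖ M |
            ∀ s ∈ S, ∀ y ∈ N, ∃ z ∈ N, y = op s • z}, (N : Submodule Rᵐᵒᵖ M) := by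
          rw [← sSup_eq_iSup']
          exact hz
        refine Submodule.iSup_induction (motive := fun z => ∃ w ∈ divSub R S M, z = op s • w)
          _ hz' ?_ ?_ ?_
        · rintro ⟨N, hN⟩ x hx
          obtain ⟨w, hw, hwe⟩ := hN s hs x hx
          exact ⟨w, (le_sSup hN) hw, hwe⟩
        · exact ⟨0, zero_mem _, by rw [smul_zero]⟩
        · rintro x₁ x₂ ⟨w₁, hw₁, rfl⟩ ⟨w₂, hw₂, rfl⟩
          exact ⟨w₁ + w₂, add_mem hw₁ hw₂, (smul_add _ _ _).symm⟩
      have tfD : ∀ s ∈ S, ∀ x : (divSub R S M), op s • x = 0 → x = 0 := by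
        intro s hs x hx
        have hx' : op s • (x : M) = 0 := by
          have := congrArg Subtype.val hx
          simpa using this
        exact Subtype.ext (tf s hs x hx')
      have dvD' : ∀ s ∈ S, ∀ z : (divSub R S M), ∃ w : (divSub R S M), z = op s • w := by
        intro s hs z
        obtain ⟨w, hw, hwe⟩ := dvD s hs z z.2
        exact ⟨⟨w, hw⟩, Subtype.ext (by simpa using hwe)⟩
      letI instQ : Module Qᵐᵒᵖ (divSub R S M) := qmodule tfD dvD' hfrac hOre hinj
      set v : (divSub R S M) := ⟨y, hy⟩ with hv
      refine ⟨{ toFun := fun q => ((op q • v : divSub R S M) : M),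
                map_add' := ?_, map_smul' := ?_ }, ?_, ?_⟩
      · intro q₁ q₂
        show ((op (q₁ + q₂) • v : divSub R S M) : M)
            = ((op q₁ • v : divSub R S M) : M) + ((op q₂ • v : divSub R S M) : M)
        rw [op_add, add_smul]
        rfl
      · intro c q
        induction c using MulOpposite.rec' with
        | h r =>
          show ((op ((op r : Rᵐᵒᵖ) • q) • v : divSub R S M) : M)
              = (op r : Rᵐᵒᵖ) • ((op q • v : divSub R S M) : M)
          have h3 : (op (φ r) : Qᵐᵒᵖ) • (op q • v) = (op r : Rᵐᵒᵖ) • (op q • v) :=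
            qsmul_phi tfD dvD' hfrac hOre hinj r (op q • v)
          rw [hsmul q r, op_mul, mul_smul, h3]
          rfl
      · rintro _ ⟨q, rfl⟩
        exact (op q • v).2
      · show ((op (1 : Q) • v : divSub R S M) : M) = y
        rw [op_one, one_smul]
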